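/- Under the hypotheses of the HOS construction (rank-1 ν, truncations ν_{i₀}, ν_i with ν_{i₀}(Q_i) < μ(Q_i), and ν_{i₀}(r) = μ(r) whenever deg_x r < deg_x Q_i): if Q_i ν_{i₀}-divides a product f·g (i.e., there is h with ν_{i₀}(fg − hQ_i) > ν_{i₀}(fg)), then Q_i ν_{i₀}-divides f or Q_i ν_{i₀}-divides g. That is, Q_i is ν_{i₀}-irreducible. -/

import Mathlib

open Polynomial Finset

section Aux

variable {K : Type*} [Field K]

/-- A multiplicative valuation-like map sends `-x` and `x` to the same value. -/
lemma aux_val_neg (v : Polynomial K → WithTop ℝ)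
    (hv0 : ∀ f : Polynomial K, v f = ⊤ ↔ f = 0)
    (hvm : ∀ f g : Polynomial K, v (f * g) = v f + v g)
    (x : Polynomial K) : v (-x) = v x := by
  have h1ne : v 1 ≠ ⊤ := fun ht => one_ne_zero ((hv0 1).mp ht)
  have h11 : v 1 = v 1 + v 1 := by have := hvm 1 1; simpa using this
  have hv1 : v 1 = 0 := by
    lift v 1 to ℝ using h1ne with a ha
    have h : a = a + a := by exact_mod_cast h11
    have h0 : a = 0 := by linarith
    exact_mod_cast h0
  have hn1ne : v (-1) ≠ ⊤ := fun ht => (neg_ne_zero.mpr one_ne_zero) ((hv0 (-1)).mp ht)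
  have hnn : v (-1) + v (-1) = 0 := by
    have := hvm (-1) (-1)
    simp only [neg_mul, one_mul, neg_neg, hv1] at this
    exact this.symm
  have hvn1 : v (-1) = 0 := by
    lift v (-1) to ℝ using hn1ne with b hb
    have h : b + b = 0 := by exact_mod_cast hnn
    have h0 : b = 0 := by linarith
    exact_mod_cast h0
  calc v (-x) = v ((-1) * x) := by rw [neg_one_mul]
    _ = v (-1) + v x := hvm _ _
    _ = v x := by rw [hvn1, zero_add]

/-- If `w f < μ f`, then `Q` `w`-divides `f`. -/
lemma aux_lemA (μ w : Polynomial K → WithTop ℝ) (Q : Polynomial K) (hQmonic : Q.Monic)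
    (hμ0 : ∀ f, μ f = ⊤ ↔ f = 0)
    (hμm : ∀ f g, μ (f * g) = μ f + μ g)
    (hμa : ∀ f g, min (μ f) (μ g) ≤ μ (f + g))
    (hw0 : ∀ f, w f = ⊤ ↔ f = 0)
    (hwm : ∀ f g, w (f * g) = w f + w g)
    (hwa : ∀ f g, min (w f) (w g) ≤ w (f + g))
    (hfact2 : ∀ r : Polynomial K, r.degree < Q.degree → w r = μ r)
    (hfact3 : ∀ q : Polynomial K, q ≠ 0 → w (q * Q) < μ (q * Q))
    (f : Polynomial K) (hf : w f < μ f) : ∃ h, w f < w (f - h * Q) := by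
  set q := f /ₘ Q with hq
  set r := f %ₘ Q with hr
  have hfeq : f - q * Q = r := by
    have h := modByMonic_add_div f Q
    rw [hq, hr]; linear_combination -h
  have hdeg : r.degree < Q.degree := degree_modByMonic_lt f hQmonic
  have hwr : w r = μ r := hfact2 r hdeg
  rcases eq_or_ne q 0 with h0 | h0
  · exfalso
    have hfr : f = r := by rw [← hfeq, h0]; ring
    rw [hfr, hwr] at hf
    exact lt_irrefl _ hf
  · refine ⟨q, ?_⟩
    rw [hfeq]
    by_contra hcon
    push_neg at hcon
    have hμr : μ r < μ f := by
      calc μ r = w r := hwr.symm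
        _ ≤ w f := hcon
        _ < μ f := hf
    have h1 : min (μ f) (μ (q * Q)) ≤ μ r := by
      have h := hμa f (-(q * Q))
      rw [aux_val_neg μ hμ0 hμm, (show f + -(q * Q) = r by rw [← hfeq]; ring)] at h
      exact h
    have h3 : μ (q * Q) ≤ μ r := by
      rcases min_le_iff.mp h1 with h | h
      · exact absurd h (not_le.mpr hμr)
      · exact h
    have h4 : w (q * Q) < w r := by
      calc w (q * Q) < μ (q * Q) := hfact3 q h0
        _ ≤ μ r := h3
        _ = w r := hwr.symm
    have h5 : w r ≤ w (q * Q) := by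
      have h := hwa f (-r)
      rw [aux_val_neg w hw0 hwm, (show f + -r = q * Q by rw [← hfeq]; ring),
        min_eq_right hcon] at h
      exact h
    exact absurd h5 (not_le.mpr h4)

/-- If `Q` `w`-divides `f`, then `w f < μ f`. -/
lemma aux_lemB (μ w : Polynomial K → WithTop ℝ) (Q : Polynomial K)
    (hμa : ∀ f g, min (μ f) (μ g) ≤ μ (f + g))
    (hw0 : ∀ f, w f = ⊤ ↔ f = 0)
    (hwm : ∀ f g, w (f * g) = w f + w g)
    (hwa : ∀ f g, min (w f) (w g) ≤ w (f + g))
    (hle : ∀ f, w f ≤ μ f)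
    (hfact3 : ∀ q : Polynomial K, q ≠ 0 → w (q * Q) < μ (q * Q))
    (f h : Polynomial K) (hlt : w f < w (f - h * Q)) : w f < μ f := by
  have hh0 : h ≠ 0 := by
    rintro rfl
    simp only [zero_mul, sub_zero] at hlt
    exact lt_irrefl _ hlt
  set r := f - h * Q with hr
  have h5 : w f ≤ w (h * Q) := by
    have hx := hwa f (-r)
    rw [aux_val_neg w hw0 hwm, (show f + -r = h * Q by rw [hr]; ring),
      min_eq_left (le_of_lt hlt)] at hx
    exact hx
  have h6 : w f < μ (h * Q) := lt_of_le_of_lt h5 (hfact3 h hh0)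
  have h7 : w f < μ r := lt_of_lt_of_le hlt (hle r)
  have h8 : min (μ r) (μ (h * Q)) ≤ μ f := by
    have hx := hμa r (h * Q)
    rw [(show r + h * Q = f by rw [hr]; ring)] at hx
    exact hx
  exact lt_of_lt_of_le (lt_min h7 h6) h8

end Aux

/-- Under the hypotheses of the HOS construction (rank-1, encoded by values in
`ℝ`): if `Q` `w`-divides a product `f·g` (where `w = ν_{i₀}` is the preceding
truncation of `μ`), then `Q` `w`-divides `f` or `Q` `w`-divides `g`; that is,
`Q` is `w`-irreducible. -/
theorem stmt10 {K : Type*} [Field K]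
    (μ w : Polynomial K → WithTop ℝ) (Q : Polynomial K) (hQmonic : Q.Monic)
    (hμ0 : ∀ f, μ f = ⊤ ↔ f = 0)
    (hμm : ∀ f g, μ (f * g) = μ f + μ g)
    (hμa : ∀ f g, min (μ f) (μ g) ≤ μ (f + g))
    (hw0 : ∀ f, w f = ⊤ ↔ f = 0)
    (hwm : ∀ f g, w (f * g) = w f + w g)
    (hwa : ∀ f g, min (w f) (w g) ≤ w (f + g))
    (hle : ∀ f, w f ≤ μ f)
    (hfact1 : ∀ f : Polynomial K, w f < μ f → Q.degree ≤ f.degree)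
    (hfact2 : ∀ r : Polynomial K, r.degree < Q.degree → w r = μ r)
    (hfact3 : ∀ q : Polynomial K, q ≠ 0 → w (q * Q) < μ (q * Q))
    (f g : Polynomial K)
    (hdiv : ∃ h, w (f * g) < w (f * g - h * Q)) :
    (∃ h, w f < w (f - h * Q)) ∨ (∃ h, w g < w (g - h * Q)) := by
  obtain ⟨h, hh⟩ := hdiv
  have hfg : w (f * g) < μ (f * g) :=
    aux_lemB μ w Q hμa hw0 hwm hwa hle hfact3 (f * g) h hh
  have hor : w f < μ f ∨ w g < μ g := by
    by_contra hc
    push_neg at hc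
    obtain ⟨h1, h2⟩ := hc
    have e1 : w f = μ f := le_antisymm (hle f) h1
    have e2 : w g = μ g := le_antisymm (hle g) h2
    rw [hwm, hμm, e1, e2] at hfg
    exact lt_irrefl _ hfg
  rcases hor with hor | hor
  · exact Or.inl (aux_lemA μ w Q hQmonic hμ0 hμm hμa hw0 hwm hwa hfact2 hfact3 f hor)
  · exact Or.inr (aux_lemA μ w Q hQmonic hμ0 hμm hμa hw0 hwm hwa hfact2 hfact3 g hor)
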